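/- The non-indexed universe embeds into the indexed one: there is a translation t : Desc → IDesc PUnit such that for every D : Desc and X : Type, ⟦D⟧X ≃ ⟦t D⟧(fun _ => X), and consequently Mu D ≃ IMu (fun _ => t D) PUnit.unit. -/

import Mathlib

inductive Desc : Type 1
  | var : Desc
  | unit : Desc
  | times : Desc → Desc → Desc
  | pi : (S : Type) → (S → Desc) → Desc
  | sigma : (S : Type) → (S → Desc) → Desc

def interp : Desc → Type → Type
  | .var, X => X
  | .unit, _ => PUnit
  | .times D₁ D₂, X => interp D₁ X × interp D₂ X
  | .pi S T, X => ∀ s : S, interp (T s) X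
  | .sigma S T, X => Σ s : S, interp (T s) X

def dmap : (D : Desc) → {X Y : Type} → (X → Y) → interp D X → interp D Y
  | .var, _, _, f, x => f x
  | .unit, _, _, _, _ => PUnit.unit
  | .times D₁ D₂, _, _, f, x => (dmap D₁ f x.1, dmap D₂ f x.2)
  | .pi _ T, _, _, f, g => fun s => dmap (T s) f (g s)
  | .sigma _ T, _, _, f, x => ⟨x.1, dmap (T x.1) f x.2⟩

def Pos : (D : Desc) → interp D PUnit → Type
  | .var, _ => PUnit
  | .unit, _ => Empty
  | .times D₁ D₂, x => Pos D₁ x.1 ⊕ Pos D₂ x.2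
  | .pi S T, g => Σ s : S, Pos (T s) (g s)
  | .sigma _ T, x => Pos (T x.1) x.2

def shapeOf (D : Desc) {X : Type} (x : interp D X) : interp D PUnit :=
  dmap D (fun _ => PUnit.unit) x

def payload : (D : Desc) → {X : Type} → (x : interp D X) → Pos D (shapeOf D x) → X
  | .var, _, x, _ => x
  | .unit, _, _, p => p.elim
  | .times D₁ D₂, _, x, p =>
      match p with
      | .inl p₁ => payload D₁ x.1 p₁
      | .inr p₂ => payload D₂ x.2 p₂
  | .pi _ T, _, g, p => payload (T p.1) (g p.1) p.2
  | .sigma _ T, _, x, p => payload (T x.1) x.2 p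

inductive Mu (D : Desc) : Type
  | sup : (s : interp D PUnit) → (Pos D s → Mu D) → Mu D

def con (D : Desc) (d : interp D (Mu D)) : Mu D :=
  Mu.sup (shapeOf D d) (payload D d)

inductive IDesc (I : Type) : Type 1
  | var : I → IDesc I
  | unit : IDesc I
  | times : IDesc I → IDesc I → IDesc I
  | pi : (S : Type) → (S → IDesc I) → IDesc I
  | sigma : (S : Type) → (S → IDesc I) → IDesc I

def iinterp {I : Type} : IDesc I → (I → Type) → Type
  | .var i, X => X i
  | .unit, _ => PUnit
  | .times A B, X => iinterp A X × iinterp B X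
  | .pi S T, X => ∀ s : S, iinterp (T s) X
  | .sigma S T, X => Σ s : S, iinterp (T s) X

def imap {I : Type} : (D : IDesc I) → {X Y : I → Type} → (∀ i, X i → Y i) →
    iinterp D X → iinterp D Y
  | .var i, _, _, f, x => f i x
  | .unit, _, _, _, _ => PUnit.unit
  | .times A B, _, _, f, x => (imap A f x.1, imap B f x.2)
  | .pi _ T, _, _, f, g => fun s => imap (T s) f (g s)
  | .sigma _ T, _, _, f, x => ⟨x.1, imap (T x.1) f x.2⟩

def IPos {I : Type} : (D : IDesc I) → iinterp D (fun _ => PUnit) → Type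
  | .var _, _ => PUnit
  | .unit, _ => Empty
  | .times A B, x => IPos A x.1 ⊕ IPos B x.2
  | .pi S T, g => Σ s : S, IPos (T s) (g s)
  | .sigma _ T, x => IPos (T x.1) x.2

def IIdx {I : Type} : (D : IDesc I) → (s : iinterp D (fun _ => PUnit)) → IPos D s → I
  | .var i, _, _ => i
  | .times A B, x, p =>
      match p with
      | .inl p₁ => IIdx A x.1 p₁
      | .inr p₂ => IIdx B x.2 p₂
  | .pi _ T, g, p => IIdx (T p.1) (g p.1) p.2
  | .sigma _ T, x, p => IIdx (T x.1) x.2 p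

def ishapeOf {I : Type} (D : IDesc I) {X : I → Type} (x : iinterp D X) :
    iinterp D (fun _ => PUnit) :=
  imap D (fun _ _ => PUnit.unit) x

def ipayload {I : Type} : (D : IDesc I) → {X : I → Type} → (x : iinterp D X) →
    (p : IPos D (ishapeOf D x)) → X (IIdx D (ishapeOf D x) p)
  | .var _, _, x, _ => x
  | .unit, _, _, p => p.elim
  | .times A B, _, x, p =>
      match p with
      | .inl p₁ => ipayload A x.1 p₁
      | .inr p₂ => ipayload B x.2 p₂
  | .pi _ T, _, g, p => ipayload (T p.1) (g p.1) p.2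
  | .sigma _ T, _, x, p => ipayload (T x.1) x.2 p

inductive IMu {I : Type} (R : I → IDesc I) : I → Type
  | sup : ∀ (i : I) (s : iinterp (R i) (fun _ => PUnit)),
      (∀ p : IPos (R i) s, IMu R (IIdx (R i) s p)) → IMu R i

def icon {I : Type} (R : I → IDesc I) (i : I) (d : iinterp (R i) (IMu R)) : IMu R i :=
  IMu.sup i (ishapeOf (R i) d) (ipayload (R i) d)

/-- Translation of the non-indexed universe into the `PUnit`-indexed one. -/
def descToIDesc : Desc → IDesc PUnit
  | .var => IDesc.var PUnit.unit
  | .unit => IDesc.unit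
  | .times D₁ D₂ => IDesc.times (descToIDesc D₁) (descToIDesc D₂)
  | .pi S T => IDesc.pi S (fun s => descToIDesc (T s))
  | .sigma S T => IDesc.sigma S (fun s => descToIDesc (T s))

theorem interp_eq (D : Desc) (X : Type) :
    interp D X = iinterp (descToIDesc D) (fun _ => X) := by
  induction D with
  | var => rfl
  | unit => rfl
  | times D₁ D₂ ih₁ ih₂ => exact congrArg₂ Prod ih₁ ih₂
  | pi S T ih =>
      show (∀ s : S, interp (T s) X) = ∀ s : S, iinterp (descToIDesc (T s)) (fun _ => X)
      exact congrArg (fun F : S → Type => ∀ s, F s) (funext ih)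
  | sigma S T ih =>
      show (Σ s : S, interp (T s) X) = Σ s : S, iinterp (descToIDesc (T s)) (fun _ => X)
      exact congrArg (fun F : S → Type => Σ s, F s) (funext ih)

theorem cast_prod {A A' B B' : Type} (h₁ : A = A') (h₂ : B = B')
    (h : (A × B) = (A' × B')) (x : A × B) :
    cast h x = (cast h₁ x.1, cast h₂ x.2) := by subst h₁; subst h₂; rfl

theorem cast_pi {S : Type} {A B : S → Type} (h : ∀ s, A s = B s)
    (H : (∀ s, A s) = ∀ s, B s) (g : ∀ s, A s) :
    cast H g = fun s => cast (h s) (g s) := by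
  have hAB : A = B := funext h
  subst hAB; rfl

theorem cast_sigma {S : Type} {A B : S → Type} (h : ∀ s, A s = B s)
    (H : (Σ s, A s) = Σ s, B s) (x : Σ s, A s) :
    cast H x = ⟨x.1, cast (h x.1) x.2⟩ := by
  have hAB : A = B := funext h
  subst hAB; rfl

theorem pos_eq (D : Desc) (s : interp D PUnit) :
    Pos D s = IPos (descToIDesc D) (cast (interp_eq D PUnit) s) := by
  induction D with
  | var => rfl
  | unit => rfl
  | times D₁ D₂ ih₁ ih₂ =>
      erw [cast_prod (interp_eq D₁ PUnit) (interp_eq D₂ PUnit)]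
      exact congrArg₂ Sum (ih₁ s.1) (ih₂ s.2)
  | pi S T ih =>
      erw [cast_pi (fun a => interp_eq (T a) PUnit)]
      exact congrArg (fun F : S → Type => Σ a, F a) (funext fun a => ih a (s a))
  | sigma S T ih =>
      erw [cast_sigma (fun a => interp_eq (T a) PUnit)]
      exact ih s.1 s.2

theorem pos_eq' (D : Desc) (s : iinterp (descToIDesc D) (fun _ => PUnit)) :
    Pos D (cast (interp_eq D PUnit).symm s) = IPos (descToIDesc D) s := by
  rw [pos_eq]
  congr 1
  simp

def toI (D : Desc) : Mu D → IMu (fun _ : PUnit => descToIDesc D) PUnit.unit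
  | .sup s f =>
      IMu.sup PUnit.unit (cast (interp_eq D PUnit) s)
        (fun p => toI D (f (cast (pos_eq D s).symm p)))

def fromI (D : Desc) : ∀ i, IMu (fun _ : PUnit => descToIDesc D) i → Mu D
  | _, .sup _ s f =>
      Mu.sup (cast (interp_eq D PUnit).symm s)
        (fun p => fromI D _ (f (cast (pos_eq' D s) p)))

theorem mu_sup_congr (D : Desc) {s₁ s₂ : interp D PUnit}
    (hs : s₁ = s₂) {f₁ : Pos D s₁ → Mu D} {f₂ : Pos D s₂ → Mu D}
    (hf : ∀ p, f₁ p = f₂ (cast (congrArg (Pos D) hs) p)) :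
    Mu.sup s₁ f₁ = Mu.sup s₂ f₂ := by
  subst hs
  exact congrArg _ (funext hf)

theorem imu_sup_congr (D : Desc) {s₁ s₂ : iinterp (descToIDesc D) (fun _ => PUnit)}
    (hs : s₁ = s₂)
    {f₁ : ∀ p : IPos (descToIDesc D) s₁, IMu (fun _ : PUnit => descToIDesc D) PUnit.unit}
    {f₂ : ∀ p : IPos (descToIDesc D) s₂, IMu (fun _ : PUnit => descToIDesc D) PUnit.unit}
    (hf : ∀ p, f₁ p = f₂ (cast (congrArg (IPos (descToIDesc D)) hs) p)) :
    @IMu.sup PUnit (fun _ => descToIDesc D) PUnit.unit s₁ f₁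
      = @IMu.sup PUnit (fun _ => descToIDesc D) PUnit.unit s₂ f₂ := by
  subst hs
  exact congrArg _ (funext hf)

theorem fromI_toI (D : Desc) : ∀ m : Mu D, fromI D PUnit.unit (toI D m) = m := by
  intro m
  induction m with
  | sup s f ih =>
      show Mu.sup _ _ = _
      refine mu_sup_congr D (by simp) (fun p => ?_)
      rw [ih]
      congr 1
      simp [cast_cast]

theorem toI_fromI (D : Desc) :
    ∀ (i : PUnit) (m : IMu (fun _ : PUnit => descToIDesc D) i),
      toI D (fromI D i m) = m := by
  intro i m
  induction m with
  | sup i s f ih =>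
      show IMu.sup _ _ _ = _
      refine imu_sup_congr D (by simp) (fun p => ?_)
      rw [ih]
      congr 1
      simp [cast_cast]

/-- The non-indexed universe embeds into the indexed one. -/
theorem desc_embeds (D : Desc) :
    (∀ X : Type, Nonempty (interp D X ≃ iinterp (descToIDesc D) (fun _ => X))) ∧
    Nonempty (Mu D ≃ IMu (fun _ : PUnit => descToIDesc D) PUnit.unit) := by
  refine ⟨fun X => ⟨Equiv.cast (interp_eq D X)⟩,
    ⟨⟨toI D, fromI D PUnit.unit, fromI_toI D, toI_fromI D PUnit.unit⟩⟩⟩
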